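/- For real numbers ξ_1 < ξ_2 < ... < ξ_{r+1}, the determinant of the r×r matrix with entries V_{ij} = (1/(ξ_{i+1}−ξ_i)) ∫_{ξ_i}^{ξ_{i+1}} x^{j-1} dx equals (1/r!) · ∏_{1 ≤ i, with i+1 < j ≤ r+1} (ξ_j − ξ_i), i.e., the full Vandermonde-type product over all pairs i<j omitting the consecutive factors (ξ_{i+1} − ξ_i). -/

import Mathlib

open Polynomial intervalIntegral

section aux
variable {r : ℕ} (ξ : Fin (r + 1) → ℝ)

noncomputable def Lmat (r : ℕ) : Matrix (Fin (r+1)) (Fin (r+1)) ℝ :=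
  Matrix.of fun i k => (if k = i then (1:ℝ) else 0) - (if (k:ℕ)+1 = (i:ℕ) then 1 else 0)

lemma Lmat_det (r : ℕ) : (Lmat r).det = 1 := by
  rw [Matrix.det_of_lowerTriangular]
  · simp [Lmat]
  · intro i k hik
    simp only [OrderDual.toDual_lt_toDual] at hik
    have h1 : ¬ (k = i) := by rintro rfl; exact lt_irrefl _ hik
    have h2 : ¬ ((k:ℕ)+1 = (i:ℕ)) := by
      have : (i:ℕ) < k := hik
      omega
    simp [Lmat, h1, h2]

lemma LV_zero (j : Fin (r+1)) :
    (Lmat r * Matrix.vandermonde ξ) 0 j = ξ 0 ^ (j:ℕ) := by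
  simp only [Matrix.mul_apply, Lmat, Matrix.of_apply, Matrix.vandermonde_apply, sub_mul,
    ite_mul, one_mul, zero_mul]
  rw [Finset.sum_sub_distrib, Finset.sum_ite_eq' Finset.univ (0 : Fin (r+1))]
  simp

lemma LV_succ (i : Fin r) (j : Fin (r+1)) :
    (Lmat r * Matrix.vandermonde ξ) i.succ j = ξ i.succ ^ (j:ℕ) - ξ i.castSucc ^ (j:ℕ) := by
  simp only [Matrix.mul_apply, Lmat, Matrix.of_apply, Matrix.vandermonde_apply, sub_mul,
    ite_mul, one_mul, zero_mul]
  rw [Finset.sum_sub_distrib, Finset.sum_ite_eq' Finset.univ (i.succ : Fin (r+1))]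
  have hcond : ∀ k : Fin (r+1), ((k:ℕ)+1 = ((i.succ : Fin (r+1)):ℕ)) ↔ k = i.castSucc := by
    intro k
    rw [Fin.val_succ, Fin.ext_iff, Fin.coe_castSucc]
    omega
  rw [Finset.sum_congr rfl (fun k _ => by rw [if_congr (hcond k) rfl rfl]),
    Finset.sum_ite_eq' Finset.univ (i.castSucc : Fin (r+1))]
  simp

end aux

section aux2
variable {r : ℕ}

lemma detA (ξ : Fin (r + 1) → ℝ) :
    (Matrix.of fun i j : Fin r =>
        ξ i.succ ^ ((j:ℕ)+1) - ξ i.castSucc ^ ((j:ℕ)+1)).det =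
      ∏ i : Fin (r + 1), ∏ j ∈ Finset.Ioi i, (ξ j - ξ i) := by
  have h1 : (Lmat r * Matrix.vandermonde ξ).det
      = ∏ i : Fin (r + 1), ∏ j ∈ Finset.Ioi i, (ξ j - ξ i) := by
    rw [Matrix.det_mul, Lmat_det, one_mul, Matrix.det_vandermonde]
  rw [Matrix.det_succ_column_zero, Fin.sum_univ_succ] at h1
  have hz : ∀ i : Fin r, (Lmat r * Matrix.vandermonde ξ) i.succ 0 = 0 := by
    intro i; rw [LV_succ]; simp
  have h00 : (Lmat r * Matrix.vandermonde ξ) 0 0 = 1 := by rw [LV_zero]; simp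
  simp only [hz, h00, mul_zero, zero_mul, mul_one, Finset.sum_const_zero, add_zero,
    Fin.val_zero, pow_zero, one_mul, Fin.succAbove_zero] at h1
  rw [← h1]
  congr 1
  ext i j
  simp [Matrix.submatrix_apply, LV_succ, Fin.val_succ]

end aux2

theorem stmt11 (r : ℕ) (hr : 0 < r) (ξ : Fin (r + 1) → ℝ) (hmono : StrictMono ξ) :
    (Matrix.of fun i j : Fin r =>
        (ξ i.succ - ξ i.castSucc)⁻¹ * ∫ x in (ξ i.castSucc)..(ξ i.succ), x ^ (j : ℕ)).det =
      ((r.factorial : ℝ))⁻¹ *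
        ∏ i : Fin (r + 1),
          ∏ j ∈ (Finset.Ioi i).filter (fun j : Fin (r + 1) => (i : ℕ) + 1 < (j : ℕ)), (ξ j - ξ i) := by
  set A : Matrix (Fin r) (Fin r) ℝ :=
    Matrix.of fun i j : Fin r => ξ i.succ ^ ((j:ℕ)+1) - ξ i.castSucc ^ ((j:ℕ)+1) with hA
  -- rewrite the matrix
  have hM : (Matrix.of fun i j : Fin r =>
        (ξ i.succ - ξ i.castSucc)⁻¹ * ∫ x in (ξ i.castSucc)..(ξ i.succ), x ^ (j : ℕ))
      = Matrix.of fun i j : Fin r => (ξ i.succ - ξ i.castSucc)⁻¹ *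
          (Matrix.of fun i j : Fin r => (((j:ℕ):ℝ)+1)⁻¹ * A i j) i j := by
    ext i j
    simp only [Matrix.of_apply, integral_pow, hA]
    ring
  rw [hM, Matrix.det_mul_column, Matrix.det_mul_row]
  -- factorial product
  have hfact : (∏ j : Fin r, ((((j:ℕ):ℝ))+1)⁻¹) = ((r.factorial : ℝ))⁻¹ := by
    rw [Finset.prod_inv_distrib]
    congr 1
    rw [Fin.prod_univ_eq_prod_range (fun j => ((j:ℝ)+1))]
    push_cast [← Finset.prod_range_add_one_eq_factorial]
    ring
  -- splitting the vandermonde product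
  have hsplit : (∏ i : Fin (r + 1), ∏ j ∈ Finset.Ioi i, (ξ j - ξ i))
      = (∏ i : Fin (r + 1),
          ∏ j ∈ (Finset.Ioi i).filter (fun j : Fin (r + 1) => (i : ℕ) + 1 < (j : ℕ)), (ξ j - ξ i))
        * ∏ i : Fin r, (ξ i.succ - ξ i.castSucc) := by
    have h1 : ∀ i : Fin (r+1), ∏ j ∈ Finset.Ioi i, (ξ j - ξ i)
        = (∏ j ∈ (Finset.Ioi i).filter (fun j : Fin (r + 1) => (i : ℕ) + 1 < (j : ℕ)), (ξ j - ξ i))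
          * ∏ j ∈ (Finset.Ioi i).filter (fun j : Fin (r + 1) => ¬ ((i : ℕ) + 1 < (j : ℕ))), (ξ j - ξ i) :=
      fun i => (Finset.prod_filter_mul_prod_filter_not _ _ _).symm
    rw [Finset.prod_congr rfl (fun i _ => h1 i), Finset.prod_mul_distrib]
    congr 1
    rw [Fin.prod_univ_castSucc]
    have hlast : (Finset.Ioi (Fin.last r)).filter
        (fun j : Fin (r + 1) => ¬ ((Fin.last r : ℕ) + 1 < (j : ℕ))) = ∅ := by
      apply Finset.eq_empty_of_forall_notMem
      intro j hj
      rw [Finset.mem_filter, Finset.mem_Ioi] at hj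
      exact absurd hj.1 (not_lt_of_ge (Fin.le_last j))
    have hcs : ∀ i : Fin r, (Finset.Ioi i.castSucc).filter
        (fun j : Fin (r + 1) => ¬ ((i.castSucc : ℕ) + 1 < (j : ℕ))) = {i.succ} := by
      intro i
      ext j
      simp only [Finset.mem_filter, Finset.mem_Ioi, Finset.mem_singleton, Fin.lt_def,
        Fin.coe_castSucc, Fin.ext_iff, Fin.val_succ, not_lt]
      omega
    rw [hlast]
    simp only [hcs, Finset.prod_singleton, Finset.prod_empty, mul_one]
  -- diffs nonzero
  have hdpos : ∀ i : Fin r, 0 < ξ i.succ - ξ i.castSucc :=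
    fun i => sub_pos.mpr (hmono Fin.castSucc_lt_succ)
  have hdne : (∏ i : Fin r, (ξ i.succ - ξ i.castSucc)) ≠ 0 :=
    ne_of_gt (Finset.prod_pos fun i _ => hdpos i)
  rw [hfact, detA, hsplit, Finset.prod_inv_distrib]
  field_simp
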